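/- arXiv:2504.11525 — 2 statements merged into one kernel-verified Lean document; each statement's English description precedes it below -/
import Mathlib

section
/- Let n ≥ 1 and let x : Fin (n+1) → ℂ be injective. For each l, define ψ_l ∈ EuclideanSpace ℂ (Fin n → Fin 2) by ψ_l i = (x l) ^ (∑ j, (i j : ℕ)); each ψ_l is fully product (ψ_l i = ∏ j, (x l)^{(i j : ℕ)}). Then the span of {ψ_l : l : Fin (n+1)} equals the span of the Dicke states {D_n^k : 0 ≤ k ≤ n}. -/
/-- The unnormalized `n`-qubit Dicke state with `k` excitations. -/
noncomputable def dicke (n k : ℕ) : EuclideanSpace ℂ (Fin n → Fin 2) :=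
  WithLp.toLp 2 (fun i => if (∑ j, ((i j : ℕ))) = k then 1 else 0)

lemma dicke_sum_le (n : ℕ) (i : Fin n → Fin 2) : (∑ j, ((i j : ℕ))) ≤ n := by
  calc ∑ j, ((i j : ℕ)) ≤ ∑ _j : Fin n, 1 :=
        Finset.sum_le_sum (fun j _ => Nat.lt_succ_iff.mp (i j).is_lt)
    _ = n := by simp

/-- For injective `x : Fin (n+1) → ℂ`, the fully product vectors
`ψ_l i = (x l) ^ (∑ j, i j)` span the same subspace as the Dicke states
`D_n^k`, `0 ≤ k ≤ n`. -/
theorem span_nUPB_eq_span_dicke (n : ℕ) (hn : 1 ≤ n)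
    (x : Fin (n + 1) → ℂ) (hx : Function.Injective x)
    (ψ : Fin (n + 1) → EuclideanSpace ℂ (Fin n → Fin 2))
    (hψ : ∀ l i, ψ l i = (x l) ^ (∑ j, ((i j : ℕ)))) :
    (∀ l i, ψ l i = ∏ j, (x l) ^ ((i j : ℕ))) ∧
    Submodule.span ℂ (Set.range ψ) =
      Submodule.span ℂ {v | ∃ k ≤ n, v = dicke n k} := by
  constructor
  · intro l i
    rw [hψ, ← Finset.prod_pow_eq_pow_sum]
  set V := Matrix.vandermonde x with hV
  set D : Fin (n + 1) → EuclideanSpace ℂ (Fin n → Fin 2) := fun k => dicke n k with hD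
  have hψD : ∀ l, ψ l = ∑ k, V l k • D k := by
    intro l
    ext i
    have hS : (∑ j, ((i j : ℕ))) ≤ n := dicke_sum_le n i
    have happ : (∑ k, V l k • D k) i = ∑ k, V l k * D k i :=
      by simp
    rw [hψ, happ,
      Finset.sum_eq_single (⟨∑ j, (i j : ℕ), Nat.lt_succ_of_le hS⟩ : Fin (n + 1))]
    · simp [hV, Matrix.vandermonde, hD, dicke]
    · intro k _ hk
      simp only [hV, Matrix.vandermonde, hD, dicke, mul_ite, mul_one, mul_zero]
      rw [if_neg]
      intro h
      exact hk (Fin.ext h.symm)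
    · simp
  have hdet : V.det ≠ 0 := by
    rw [hV, Matrix.det_vandermonde]
    refine Finset.prod_ne_zero_iff.mpr fun i _ => Finset.prod_ne_zero_iff.mpr fun j hj => ?_
    have hij : i ≠ j := (Finset.mem_Ioi.mp hj).ne
    exact sub_ne_zero_of_ne fun h => hij (hx h.symm)
  have hinv : V⁻¹ * V = 1 := Matrix.nonsing_inv_mul V (isUnit_iff_ne_zero.mpr hdet)
  have hDψ : ∀ k, D k = ∑ l, V⁻¹ k l • ψ l := by
    intro k
    have : ∑ l, V⁻¹ k l • ψ l = ∑ m, (∑ l, V⁻¹ k l * V l m) • D m := by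
      simp only [hψD, Finset.smul_sum, smul_smul]
      rw [Finset.sum_comm]
      simp [Finset.sum_smul]
    rw [this]
    have h1 : ∀ m, (∑ l, V⁻¹ k l * V l m) = (1 : Matrix (Fin (n+1)) (Fin (n+1)) ℂ) k m := by
      intro m; rw [← hinv]; rfl
    simp only [h1, Matrix.one_apply]
    simp
  have hset : {v | ∃ k ≤ n, v = dicke n k} = Set.range D := by
    ext v
    constructor
    · rintro ⟨k, hk, rfl⟩
      exact ⟨⟨k, Nat.lt_succ_of_le hk⟩, rfl⟩
    · rintro ⟨k, rfl⟩
      exact ⟨k, Nat.lt_succ_iff.mp k.is_lt, rfl⟩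
  rw [hset]
  apply le_antisymm
  · rw [Submodule.span_le]
    rintro _ ⟨l, rfl⟩
    rw [hψD l]
    exact Submodule.sum_mem _ fun k _ =>
      Submodule.smul_mem _ _ (Submodule.subset_span ⟨k, rfl⟩)
  · rw [Submodule.span_le]
    rintro _ ⟨k, rfl⟩
    rw [hDψ k]
    exact Submodule.sum_mem _ fun l _ =>
      Submodule.smul_mem _ _ (Submodule.subset_span ⟨l, rfl⟩)
end

section
/- Let n ≥ 2 and d ≥ 1. Suppose ψ ∈ EuclideanSpace ℂ (Fin n → Fin d) is symmetric, i.e., ψ (i ∘ σ) = ψ i for every permutation σ of Fin n and every i, and suppose ψ is S-biseparable for some subset S ⊆ Fin n with S ≠ ∅ and S ≠ univ. Then ψ is fully product; in fact there exists φ : Fin d → ℂ such that ψ i = ∏ j, φ (i j) for all i. Consequently every symmetric completely entangled subspace is a genuinely entangled subspace. -/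
/-- A vector of the `n`-qudit space is *fully product* if it is a simple tensor. -/
def FullyProduct {n d : ℕ} (ψ : EuclideanSpace ℂ (Fin n → Fin d)) : Prop :=
  ∃ φ : Fin n → Fin d → ℂ, ∀ i, ψ i = ∏ j, φ j (i j)

/-- `ψ` is biseparable across the bipartition `(S, Sᶜ)` of the `n` qudits. -/
def Biseparable {n d : ℕ} (S : Set (Fin n))
    (ψ : EuclideanSpace ℂ (Fin n → Fin d)) : Prop :=
  ∃ (φ : ((j : S) → Fin d) → ℂ) (χ : ((j : ↥Sᶜ) → Fin d) → ℂ),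
    ∀ i, ψ i = φ (fun j => i j.val) * χ (fun j => i j.val)

/-- A nonzero vector is genuinely multipartite entangled if it is not biseparable
across any nontrivial bipartition. -/
def GME {n d : ℕ} (ψ : EuclideanSpace ℂ (Fin n → Fin d)) : Prop :=
  ψ ≠ 0 ∧ ∀ S : Set (Fin n), S ≠ ∅ → S ≠ Set.univ → ¬ Biseparable S ψ

/-- A vector is *symmetric* if it is invariant under all permutations of the parties. -/
def SymmetricVec {n d : ℕ} (ψ : EuclideanSpace ℂ (Fin n → Fin d)) : Prop :=
  ∀ (σ : Equiv.Perm (Fin n)) (i : Fin n → Fin d), ψ (i ∘ σ) = ψ i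


open Classical in
/-- `mix S i j` equals `i` on `S` and `j` off `S`. -/
noncomputable def mix {n d : ℕ} (S : Set (Fin n)) (i j : Fin n → Fin d) : Fin n → Fin d :=
  fun a => if a ∈ S then i a else j a

namespace MixAux

variable {n d : ℕ}

lemma mix_univ (i j : Fin n → Fin d) : mix Set.univ i j = i := by
  funext a; simp [mix]

lemma mix_empty (i j : Fin n → Fin d) : mix (∅ : Set (Fin n)) i j = j := by
  funext a; simp [mix]

lemma mix_compl (S : Set (Fin n)) (i j : Fin n → Fin d) : mix Sᶜ i j = mix S j i := by
  funext a; by_cases h : a ∈ S <;> simp [mix, h]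

lemma mix_mix (S X Y : Set (Fin n)) (i j : Fin n → Fin d) :
    mix S (mix X i j) (mix Y i j) = mix ((S ∩ X) ∪ (Y \ S)) i j := by
  funext a
  by_cases hS : a ∈ S <;> by_cases hX : a ∈ X <;> by_cases hY : a ∈ Y <;>
    simp [mix, hS, hX, hY]

/-- The exchange (rank-one) property of `ψ` w.r.t. the cut `S`. -/
def Exch (ψ : EuclideanSpace ℂ (Fin n → Fin d)) (S : Set (Fin n)) : Prop :=
  ∀ i j, ψ i * ψ j = ψ (mix S i j) * ψ (mix S j i)

lemma psi_mix_of_bisep {S : Set (Fin n)} {ψ : EuclideanSpace ℂ (Fin n → Fin d)}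
    (φ : ((j : S) → Fin d) → ℂ) (χ : ((j : ↥Sᶜ) → Fin d) → ℂ)
    (h : ∀ i, ψ i = φ (fun j => i j.val) * χ (fun j => i j.val)) (i j : Fin n → Fin d) :
    ψ (mix S i j) = φ (fun k => i k.val) * χ (fun k => j k.val) := by
  rw [h]
  congr 1
  · congr 1; funext k; exact if_pos k.2
  · congr 1; funext k; exact if_neg k.2

lemma exch_of_bisep {S : Set (Fin n)} {ψ : EuclideanSpace ℂ (Fin n → Fin d)}
    (h : Biseparable S ψ) : Exch ψ S := by
  obtain ⟨φ, χ, h⟩ := h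
  intro i j
  rw [h i, h j, psi_mix_of_bisep φ χ h i j, psi_mix_of_bisep φ χ h j i]
  ring

lemma exch_transport {ψ : EuclideanSpace ℂ (Fin n → Fin d)} (hsym : SymmetricVec ψ)
    {S : Set (Fin n)} (hS : Exch ψ S) (σ : Equiv.Perm (Fin n)) : Exch ψ (σ ⁻¹' S) := by
  intro i j
  have hmix : ∀ u v : Fin n → Fin d,
      mix S (u ∘ ⇑σ⁻¹) (v ∘ ⇑σ⁻¹) = (mix (σ ⁻¹' S) u v) ∘ ⇑σ⁻¹ := by
    intro u v; funext a
    by_cases h : a ∈ S <;>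
      simp [mix, Set.mem_preimage, Equiv.apply_symm_apply, h]
  have h := hS (i ∘ ⇑σ⁻¹) (j ∘ ⇑σ⁻¹)
  rw [hmix i j, hmix j i, hsym σ⁻¹ i, hsym σ⁻¹ j, hsym σ⁻¹ (mix (σ ⁻¹' S) i j),
    hsym σ⁻¹ (mix (σ ⁻¹' S) j i)] at h
  exact h

lemma exch_inter {ψ : EuclideanSpace ℂ (Fin n → Fin d)} {S T : Set (Fin n)}
    (hS : Exch ψ S) (hT : Exch ψ T) : Exch ψ (S ∩ T) := by
  intro i j
  set F : Set (Fin n) → ℂ := fun X => ψ (mix X i j) with hF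
  have ex : ∀ (U : Set (Fin n)), Exch ψ U → ∀ X Y : Set (Fin n),
      F X * F Y = F ((U ∩ X) ∪ (Y \ U)) * F ((U ∩ Y) ∪ (X \ U)) := by
    intro U hU X Y
    have h := hU (mix X i j) (mix Y i j)
    rwa [mix_mix, mix_mix] at h
  have e1 : F Set.univ * F ∅ = F S * F Sᶜ := by
    have h := ex S hS Set.univ ∅
    have h1 : (S ∩ Set.univ ∪ ∅ \ S) = S := by ext a; simp
    have h2 : (S ∩ ∅ ∪ Set.univ \ S) = Sᶜ := by ext a; simp
    rwa [h1, h2] at h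
  have e2 : F S * F ∅ = F (S ∩ T) * F (S \ T) := by
    have h := ex T hT S ∅
    have h1 : (T ∩ S ∪ ∅ \ T) = S ∩ T := by ext a; simp only [Set.mem_inter_iff, Set.mem_union, Set.mem_diff, Set.mem_compl_iff,
      Set.mem_singleton_iff, Set.mem_univ, Set.mem_empty_iff_false]; tauto
    have h2 : (T ∩ ∅ ∪ S \ T) = S \ T := by ext a; simp
    rwa [h1, h2] at h
  have e3 : F Set.univ * F (S \ T) = F S * F ((S ∩ T)ᶜ) := by
    have h := ex S hS Set.univ (S \ T)
    have h1 : (S ∩ Set.univ ∪ (S \ T) \ S) = S := by ext a; simp only [Set.mem_inter_iff, Set.mem_union, Set.mem_diff, Set.mem_compl_iff,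
      Set.mem_singleton_iff, Set.mem_univ, Set.mem_empty_iff_false]; tauto
    have h2 : (S ∩ (S \ T) ∪ Set.univ \ S) = (S ∩ T)ᶜ := by ext a; simp only [Set.mem_inter_iff, Set.mem_union, Set.mem_diff, Set.mem_compl_iff,
      Set.mem_singleton_iff, Set.mem_univ, Set.mem_empty_iff_false]; tauto
    rwa [h1, h2] at h
  have e4 : F (S ∩ T) * F ((S ∩ T)ᶜ) = F ((S ∩ T) ∪ Sᶜ) * F (S \ T) := by
    have h := ex S hS (S ∩ T) (S ∩ T)ᶜ
    have h1 : (S ∩ (S ∩ T) ∪ (S ∩ T)ᶜ \ S) = (S ∩ T) ∪ Sᶜ := by ext a; simp only [Set.mem_inter_iff, Set.mem_union, Set.mem_diff, Set.mem_compl_iff,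
      Set.mem_singleton_iff, Set.mem_univ, Set.mem_empty_iff_false]; tauto
    have h2 : (S ∩ (S ∩ T)ᶜ ∪ (S ∩ T) \ S) = S \ T := by ext a; simp only [Set.mem_inter_iff, Set.mem_union, Set.mem_diff, Set.mem_compl_iff,
      Set.mem_singleton_iff, Set.mem_univ, Set.mem_empty_iff_false]; tauto
    rwa [h1, h2] at h
  have e6 : F (S ∩ T) * F ((S ∩ T)ᶜ) = F ((S ∩ T) ∪ Tᶜ) * F (T \ S) := by
    have h := ex T hT (S ∩ T) (S ∩ T)ᶜ
    have h1 : (T ∩ (S ∩ T) ∪ (S ∩ T)ᶜ \ T) = (S ∩ T) ∪ Tᶜ := by ext a; simp only [Set.mem_inter_iff, Set.mem_union, Set.mem_diff, Set.mem_compl_iff,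
      Set.mem_singleton_iff, Set.mem_univ, Set.mem_empty_iff_false]; tauto
    have h2 : (T ∩ (S ∩ T)ᶜ ∪ (S ∩ T) \ T) = T \ S := by ext a; simp only [Set.mem_inter_iff, Set.mem_union, Set.mem_diff, Set.mem_compl_iff,
      Set.mem_singleton_iff, Set.mem_univ, Set.mem_empty_iff_false]; tauto
    rwa [h1, h2] at h
  have e5 : F ((S ∩ T) ∪ Tᶜ) * F (S \ T) = F S * F Tᶜ := by
    have h := ex T hT ((S ∩ T) ∪ Tᶜ) (S \ T)
    have h1 : (T ∩ ((S ∩ T) ∪ Tᶜ) ∪ (S \ T) \ T) = S := by ext a; simp only [Set.mem_inter_iff, Set.mem_union, Set.mem_diff, Set.mem_compl_iff,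
      Set.mem_singleton_iff, Set.mem_univ, Set.mem_empty_iff_false]; tauto
    have h2 : (T ∩ (S \ T) ∪ ((S ∩ T) ∪ Tᶜ) \ T) = Tᶜ := by ext a; simp only [Set.mem_inter_iff, Set.mem_union, Set.mem_diff, Set.mem_compl_iff,
      Set.mem_singleton_iff, Set.mem_univ, Set.mem_empty_iff_false]; tauto
    rwa [h1, h2] at h
  have key : F Set.univ * F ∅ = F (S ∩ T) * F ((S ∩ T)ᶜ) := by
    by_cases hFS : F S = 0
    · rw [e1, hFS, zero_mul]
      by_contra hR0
      have hboth : F (S ∩ T) ≠ 0 ∧ F ((S ∩ T)ᶜ) ≠ 0 := by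
        constructor <;> (intro h; apply hR0; rw [h]; ring)
      have h4 : F ((S ∩ T) ∪ Sᶜ) * F (S \ T) ≠ 0 := by
        rw [← e4]; exact mul_ne_zero hboth.1 hboth.2
      have h6 : F ((S ∩ T) ∪ Tᶜ) * F (T \ S) ≠ 0 := by
        rw [← e6]; exact mul_ne_zero hboth.1 hboth.2
      have h5 : F S * F Tᶜ ≠ 0 := by
        rw [← e5]
        exact mul_ne_zero (mul_ne_zero_iff.1 h6).1 (mul_ne_zero_iff.1 h4).2
      exact (mul_ne_zero_iff.1 h5).1 hFS
    · by_cases hFST : F (S \ T) = 0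
      · have hFe : F ∅ = 0 := by
          have h := e2
          rw [hFST, mul_zero] at h
          exact (mul_eq_zero.1 h).resolve_left hFS
        rw [hFe, mul_zero, e4, hFST, mul_zero]
      · have hmul : (F S * F (S \ T)) * (F Set.univ * F ∅) =
            (F S * F (S \ T)) * (F (S ∩ T) * F ((S ∩ T)ᶜ)) := by
          linear_combination (F Set.univ * F (S \ T)) * e2 + (F (S ∩ T) * F (S \ T)) * e3
        exact mul_left_cancel₀ (mul_ne_zero hFS hFST) hmul
  simp only [hF] at key
  rwa [mix_univ, mix_empty, mix_compl (S ∩ T)] at key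

lemma exch_singleton_of_exch {ψ : EuclideanSpace ℂ (Fin n → Fin d)} (hsym : SymmetricVec ψ) :
    ∀ (k : ℕ) (S : Set (Fin n)), S.ncard ≤ k → S.Nonempty → Sᶜ.Nonempty → Exch ψ S →
      ∃ a : Fin n, Exch ψ ({a} : Set (Fin n)) := by
  intro k
  induction k with
  | zero =>
    intro S hcard hne _ _
    exact absurd ((Set.ncard_eq_zero).1 (Nat.le_zero.1 hcard)) hne.ne_empty
  | succ k ih =>
    intro S hcard hne hnec hS
    rcases hne.exists_eq_singleton_or_nontrivial with ⟨a, rfl⟩ | hnt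
    · exact ⟨a, hS⟩
    · obtain ⟨s, hs, s', hs', hss'⟩ := hnt
      obtain ⟨t, ht⟩ := hnec
      have hst : s ≠ t := fun h => ht (h ▸ hs)
      have hs't : s' ≠ t := fun h => ht (h ▸ hs')
      set σ := Equiv.swap s t with hσ
      set T := σ ⁻¹' S with hTdef
      have hT : Exch ψ T := exch_transport hsym hS σ
      have hsT : s ∉ T := by
        simp only [hTdef, Set.mem_preimage, hσ, Equiv.swap_apply_left]
        exact ht
      have hs'T : s' ∈ T := by
        simp only [hTdef, Set.mem_preimage, hσ,
          Equiv.swap_apply_of_ne_of_ne (Ne.symm hss') hs't]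
        exact hs'
      have hint : Exch ψ (S ∩ T) := exch_inter hS hT
      have hsub : S ∩ T ⊆ S \ {s} := fun a ⟨haS, haT⟩ =>
        ⟨haS, fun h => hsT (by rwa [Set.mem_singleton_iff.1 h] at haT)⟩
      have hlt : (S ∩ T).ncard ≤ k := by
        have h1 : (S ∩ T).ncard ≤ (S \ {s}).ncard := Set.ncard_le_ncard hsub
        have h2 : (S \ {s}).ncard < S.ncard := Set.ncard_diff_singleton_lt_of_mem hs
        omega
      exact ih (S ∩ T) hlt ⟨s', hs', hs'T⟩ ⟨s, fun h => hsT h.2⟩ hint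

lemma exch_singleton_all {ψ : EuclideanSpace ℂ (Fin n → Fin d)} (hsym : SymmetricVec ψ)
    {a₀ : Fin n} (h : Exch ψ ({a₀} : Set (Fin n))) (a : Fin n) :
    Exch ψ ({a} : Set (Fin n)) := by
  have h2 := exch_transport hsym h (Equiv.swap a₀ a)
  have : (Equiv.swap a₀ a) ⁻¹' ({a₀} : Set (Fin n)) = {a} := by
    ext x
    simp only [Set.mem_preimage, Set.mem_singleton_iff]
    constructor
    · intro hx
      have := congrArg (Equiv.swap a₀ a) hx
      rwa [Equiv.swap_apply_self, Equiv.swap_apply_left] at this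
    · intro hx
      rw [hx]
      exact Equiv.swap_apply_right a₀ a
  rwa [this] at h2

lemma mix_singleton (a : Fin n) (i j : Fin n → Fin d) :
    mix ({a} : Set (Fin n)) i j = Function.update j a (i a) := by
  funext b
  by_cases h : b = a
  · subst h; simp [mix]
  · simp [mix, h, Function.update_of_ne h]

end MixAux

open MixAux in
/-- Main lemma: a nonzero-or-zero symmetric vector biseparable across a nontrivial cut
is fully product with equal factors. -/
lemma main_lemma {n d : ℕ} (hn : 2 ≤ n)
    (ψ : EuclideanSpace ℂ (Fin n → Fin d)) (hsym : SymmetricVec ψ)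
    (S : Set (Fin n)) (hS₁ : S ≠ ∅) (hS₂ : S ≠ Set.univ)
    (hbisep : Biseparable S ψ) :
    ∃ φ : Fin d → ℂ, ∀ i, ψ i = ∏ j, φ (i j) := by
  have hnpos : 0 < n := by omega
  by_cases hψ : ∀ i, ψ i = 0
  · refine ⟨0, fun i => ?_⟩
    rw [hψ i]
    simp [Finset.prod_const, zero_pow (by simpa using hnpos.ne')]
  · push_neg at hψ
    obtain ⟨i₀, h0⟩ := hψ
    -- get exchange for all singletons
    have hexS : Exch ψ S := exch_of_bisep hbisep
    obtain ⟨a₀, ha₀⟩ := exch_singleton_of_exch hsym S.ncard S le_rfl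
      (Set.nonempty_iff_ne_empty.2 hS₁) (Set.nonempty_compl.2 hS₂) hexS
    have hall : ∀ a : Fin n, Exch ψ ({a} : Set (Fin n)) := exch_singleton_all hsym ha₀
    -- telescoping product
    have key : ∀ (i : Fin n → Fin d) (X : Finset (Fin n)),
        ψ (mix (↑X) i i₀) * ψ i₀ ^ X.card =
          ψ i₀ * ∏ a ∈ X, ψ (mix ({a} : Set (Fin n)) i i₀) := by
      intro i X
      induction X using Finset.induction_on with
      | empty =>
        rw [Finset.coe_empty, mix_empty]
        simp
      | insert _ _ ha =>
        rename_i a X ih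
        have h1 := hall a (mix (↑(insert a X)) i i₀) i₀
        have hm1 : mix ({a} : Set (Fin n)) (mix (↑(insert a X)) i i₀) i₀ =
            mix ({a} : Set (Fin n)) i i₀ := by
          funext b
          by_cases hb : b = a
          · subst hb
            simp [mix]
          · simp [mix, hb]
        have hm2 : mix ({a} : Set (Fin n)) i₀ (mix (↑(insert a X)) i i₀) =
            mix (↑X : Set (Fin n)) i i₀ := by
          funext b
          by_cases hb : b = a
          · subst hb
            simp [mix, ha]
          · simp [mix, hb]
        rw [hm1, hm2] at h1
        rw [Finset.card_insert_of_notMem ha, Finset.prod_insert ha, pow_succ]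
        calc ψ (mix (↑(insert a X)) i i₀) * (ψ i₀ ^ X.card * ψ i₀)
            = (ψ (mix (↑(insert a X)) i i₀) * ψ i₀) * ψ i₀ ^ X.card := by ring
          _ = (ψ (mix ({a} : Set (Fin n)) i i₀) * ψ (mix (↑X : Set (Fin n)) i i₀)) *
                ψ i₀ ^ X.card := by rw [h1]
          _ = ψ (mix ({a} : Set (Fin n)) i i₀) *
                (ψ (mix (↑X : Set (Fin n)) i i₀) * ψ i₀ ^ X.card) := by ring
          _ = ψ (mix ({a} : Set (Fin n)) i i₀) *
                (ψ i₀ * ∏ b ∈ X, ψ (mix ({b} : Set (Fin n)) i i₀)) := by rw [ih]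
          _ = ψ i₀ * (ψ (mix ({a} : Set (Fin n)) i i₀) *
                ∏ b ∈ X, ψ (mix ({b} : Set (Fin n)) i i₀)) := by ring
    set g : Fin n → Fin d → ℂ := fun a x => ψ (Function.update i₀ a x) with hg
    have E : ∀ i : Fin n → Fin d, ψ i * ψ i₀ ^ n = ψ i₀ * ∏ a, g a (i a) := by
      intro i
      have h := key i Finset.univ
      rw [Finset.coe_univ, mix_univ, Finset.card_univ, Fintype.card_fin] at h
      rw [h]
      congr 1
      exact Finset.prod_congr rfl fun a _ => by rw [mix_singleton]
    have hgdiag : ∀ a, g a (i₀ a) = ψ i₀ := by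
      intro a; exact congrArg ψ (Function.update_eq_self a i₀)
    -- swap relation
    have hswap : ∀ (a b : Fin n), a ≠ b → ∀ x y : Fin d,
        g a x * g b y = g a y * g b x := by
      intro a b hab x y
      set i : Fin n → Fin d := Function.update (Function.update i₀ a x) b y with hi
      have hs := hsym (Equiv.swap a b) i
      have h1 := E i
      have h2 := E (i ∘ ⇑(Equiv.swap a b))
      rw [hs] at h2
      have hprods : ψ i₀ * ∏ a_1, g a_1 (i a_1) =
          ψ i₀ * ∏ a_1, g a_1 ((i ∘ ⇑(Equiv.swap a b)) a_1) := by rw [← h1, ← h2]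
      have hprod : ∏ a_1, g a_1 (i a_1) = ∏ a_1, g a_1 ((i ∘ ⇑(Equiv.swap a b)) a_1) :=
        mul_left_cancel₀ h0 hprods
      -- split both products
      have hbmem : b ∈ Finset.univ.erase a := Finset.mem_erase.2 ⟨hab.symm, Finset.mem_univ b⟩
      have hsplit : ∀ (h : Fin n → Fin d), (∀ c, c ≠ a → c ≠ b → h c = i₀ c) →
          ∏ c, g c (h c) = g a (h a) * (g b (h b) *
            ∏ c ∈ (Finset.univ.erase a).erase b, ψ i₀) := by
        intro h hh
        rw [← Finset.mul_prod_erase Finset.univ _ (Finset.mem_univ a),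
          ← Finset.mul_prod_erase _ _ hbmem]
        congr 1
        congr 1
        refine Finset.prod_congr rfl fun c hc => ?_
        obtain ⟨hcb, hca, _⟩ : c ≠ b ∧ c ≠ a ∧ True := by
          have h1 := Finset.mem_erase.1 hc
          have h2 := Finset.mem_erase.1 h1.2
          exact ⟨h1.1, h2.1, trivial⟩
        rw [hh c hca hcb, hgdiag]
      have hia : i a = x := by
        simp [hi, Function.update_of_ne hab, Function.update_self]
      have hib : i b = y := by simp [hi]
      have hioff : ∀ c, c ≠ a → c ≠ b → i c = i₀ c := by
        intro c hca hcb
        simp [hi, Function.update_of_ne hcb, Function.update_of_ne hca]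
      have hia' : (i ∘ ⇑(Equiv.swap a b)) a = y := by
        simp [Function.comp_apply, Equiv.swap_apply_left, hib]
      have hib' : (i ∘ ⇑(Equiv.swap a b)) b = x := by
        simp [Function.comp_apply, Equiv.swap_apply_right, hia]
      have hioff' : ∀ c, c ≠ a → c ≠ b → (i ∘ ⇑(Equiv.swap a b)) c = i₀ c := by
        intro c hca hcb
        simp [Function.comp_apply, Equiv.swap_apply_of_ne_of_ne hca hcb, hioff c hca hcb]
      rw [hsplit i hioff, hsplit _ hioff', hia, hib, hia', hib'] at hprod
      have hQ : ∏ c ∈ (Finset.univ.erase a).erase b, ψ i₀ ≠ 0 :=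
        Finset.prod_ne_zero_iff.2 fun _ _ => h0
      rw [← mul_assoc, ← mul_assoc] at hprod
      exact mul_right_cancel₀ hQ hprod
    -- all g's proportional to g a₀'
    have hz : ∃ z : Fin n, True := ⟨⟨0, hnpos⟩, trivial⟩
    set z : Fin n := ⟨0, hnpos⟩ with hzdef
    set c : Fin n → ℂ := fun a => g a (i₀ z) * (ψ i₀)⁻¹ with hc
    have hgc : ∀ a x, g a x = c a * g z x := by
      intro a x
      by_cases haz : a = z
      · subst haz
        rw [hc]
        simp only [hgdiag]
        field_simp
      · have h := hswap a z haz x (i₀ z)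
        rw [hgdiag z] at h
        apply mul_right_cancel₀ h0
        rw [hc]
        field_simp
        linear_combination h
    set K : ℂ := (ψ i₀ * ∏ a, c a) / ψ i₀ ^ n with hK
    have hKeq : ∀ i, ψ i = K * ∏ a, g z (i a) := by
      intro i
      have h := E i
      conv at h => rw [Finset.prod_congr rfl fun a _ => hgc a (i a)]
      rw [Finset.prod_mul_distrib] at h
      have hpow : ψ i₀ ^ n ≠ 0 := pow_ne_zero _ h0
      rw [hK, div_mul_eq_mul_div, eq_div_iff hpow]
      linear_combination h
    obtain ⟨μ, hμ⟩ := IsAlgClosed.exists_pow_nat_eq K hnpos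
    refine ⟨fun x => μ * g z x, fun i => ?_⟩
    rw [hKeq i, Finset.prod_mul_distrib, Finset.prod_const, Finset.card_univ,
      Fintype.card_fin, hμ]

/-- Proposition 3: a symmetric biseparable vector is fully product (with equal local
factors); consequently every symmetric completely entangled subspace is a genuinely
entangled subspace. -/
theorem symmetric_biseparable_is_product (n d : ℕ) (hn : 2 ≤ n) (hd : 1 ≤ d)
    (ψ : EuclideanSpace ℂ (Fin n → Fin d)) (hsym : SymmetricVec ψ)
    (S : Set (Fin n)) (hS₁ : S ≠ ∅) (hS₂ : S ≠ Set.univ)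
    (hbisep : Biseparable S ψ) :
    (∃ φ : Fin d → ℂ, ∀ i, ψ i = ∏ j, φ (i j)) ∧
    (∀ V : Submodule ℂ (EuclideanSpace ℂ (Fin n → Fin d)),
        (∀ v ∈ V, SymmetricVec v) → (∀ v ∈ V, FullyProduct v → v = 0) →
        ∀ v ∈ V, v ≠ 0 → GME v) := by
  refine ⟨main_lemma hn ψ hsym S hS₁ hS₂ hbisep, ?_⟩
  intro V hV1 hV2 v hv hv0
  refine ⟨hv0, fun S' hS1' hS2' hb => ?_⟩
  obtain ⟨φ, hφ⟩ := main_lemma hn v (hV1 v hv) S' hS1' hS2' hb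
  exact hv0 (hV2 v hv ⟨fun _ => φ, hφ⟩)
end
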